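/- Suppose (F1)–(F4) hold and the bilinear form a(·;·,·) is uniformly coercive and bounded. Then for every k ≥ 1 the iterative linearization sequence satisfies Σ_{j=k+1}^∞ ‖u^j − u^{j−1}‖_X² ≤ C₄ ‖u^k − u^{k−1}‖_X², where C₄ := L C₃²/(2 C_H) and C₃ := 1 + β/ν. -/

import Mathlib

set_option autoImplicit false

/-- Under (F1)–(F4) and uniform coercivity/boundedness of the bilinear form, the
iterative linearization sequence satisfies
`Σ_{j=k+1}^∞ ‖u^j − u^{j−1}‖² ≤ C₄ ‖u^k − u^{k−1}‖²` for every `k ≥ 1`, where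
`C₄ = L C₃² / (2 C_H)` and `C₃ = 1 + β/ν`. -/
theorem stmt_3
    {X : Type*} [NormedAddCommGroup X] [InnerProductSpace ℝ X] [CompleteSpace X]
    (F : X → X →L[ℝ] ℝ) (L ν : ℝ) (hL : 0 < L) (hν : 0 < ν)
    (hF1 : ∀ u v w : X, |F u w - F v w| ≤ L * ‖u - v‖ * ‖w‖)
    (hF2 : ∀ u v : X, ν * ‖u - v‖ ^ 2 ≤ F u (u - v) - F v (u - v))
    (ustar : X) (hustar : ∀ v : X, F ustar v = 0)
    (a : X → X →ₗ[ℝ] X →ₗ[ℝ] ℝ) (α β : ℝ) (hα : 0 < α) (hβ : 0 < β)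
    (hcoer : ∀ u v : X, α * ‖v‖ ^ 2 ≤ a u v v)
    (hbdd : ∀ u v w : X, a u v w ≤ β * ‖v‖ * ‖w‖)
    (u : ℕ → X)
    (hiter : ∀ n : ℕ, ∀ w : X, a (u n) (u (n + 1)) w = a (u n) (u n) w - F (u n) w)
    (H : X → ℝ)
    (hF3 : ∀ v w : X, ∀ t : ℝ, HasDerivAt (fun s : ℝ => H (v + s • w)) (F (v + t • w) w) t)
    (CH : ℝ) (hCH : 0 < CH)
    (hF4 : ∀ n : ℕ, 1 ≤ n → CH * ‖u n - u (n - 1)‖ ^ 2 ≤ H (u (n - 1)) - H (u n))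
    (C₃ C₄ : ℝ) (hC₃ : C₃ = 1 + β / ν) (hC₄ : C₄ = L * C₃ ^ 2 / (2 * CH)) :
    ∀ k : ℕ, 1 ≤ k →
      Summable (fun j : ℕ => ‖u (k + 1 + j) - u (k + j)‖ ^ 2) ∧
      ∑' j : ℕ, ‖u (k + 1 + j) - u (k + j)‖ ^ 2 ≤ C₄ * ‖u k - u (k - 1)‖ ^ 2 := by
  -- Step 1: H(u*) is a global minimum of H.
  have hHlow : ∀ w : X, H ustar ≤ H (ustar + w) := by
    intro w
    have hd : ∀ t : ℝ, HasDerivAt (fun s : ℝ => H (ustar + s • w)) (F (ustar + t • w) w) t :=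
      hF3 ustar w
    have hmono : MonotoneOn (fun s : ℝ => H (ustar + s • w)) (Set.Icc 0 1) := by
      apply monotoneOn_of_deriv_nonneg (convex_Icc 0 1)
      · exact fun t _ => (hd t).continuousAt.continuousWithinAt
      · intro t _
        exact (hd t).differentiableAt.differentiableWithinAt
      · intro t ht
        rw [interior_Icc] at ht
        rw [(hd t).deriv]
        have h2 := hF2 (ustar + t • w) ustar
        have hsub : (ustar + t • w) - ustar = t • w := by abel
        rw [hsub, hustar] at h2
        have hsm : (F (ustar + t • w)) (t • w) = t * (F (ustar + t • w)) w := by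
          simp
        rw [hsm] at h2
        have hn : (0:ℝ) ≤ ν * ‖t • w‖ ^ 2 := by positivity
        nlinarith [ht.1]
    have h01 := hmono (Set.mem_Icc.mpr ⟨le_refl 0, zero_le_one⟩)
      (Set.mem_Icc.mpr ⟨zero_le_one, le_refl 1⟩) zero_le_one
    simpa using h01
  -- Step 2: quadratic upper bound H(u* + w) ≤ H(u*) + (L/2)‖w‖².
  have hHupp : ∀ w : X, H (ustar + w) ≤ H ustar + L / 2 * ‖w‖ ^ 2 := by
    intro w
    have hd : ∀ t : ℝ, HasDerivAt
        (fun s : ℝ => H (ustar + s • w) - L / 2 * s ^ 2 * ‖w‖ ^ 2)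
        (F (ustar + t • w) w - L * t * ‖w‖ ^ 2) t := by
      intro t
      have h1 := hF3 ustar w t
      have h2 : HasDerivAt (fun s : ℝ => L / 2 * s ^ 2 * ‖w‖ ^ 2) (L * t * ‖w‖ ^ 2) t := by
        have h3 := ((hasDerivAt_pow 2 t).const_mul (L / 2)).mul_const (‖w‖ ^ 2)
        exact h3.congr_deriv (by ring)
      exact h1.sub h2
    have hanti : AntitoneOn (fun s : ℝ => H (ustar + s • w) - L / 2 * s ^ 2 * ‖w‖ ^ 2)
        (Set.Icc 0 1) := by
      apply antitoneOn_of_deriv_nonpos (convex_Icc 0 1)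
      · exact fun t _ => (hd t).continuousAt.continuousWithinAt
      · intro t _
        exact (hd t).differentiableAt.differentiableWithinAt
      · intro t ht
        rw [interior_Icc] at ht
        rw [(hd t).deriv]
        have h1 := hF1 (ustar + t • w) ustar w
        have hsub : (ustar + t • w) - ustar = t • w := by abel
        rw [hsub, hustar, norm_smul] at h1
        have habs := (abs_le.mp (by simpa using h1)).2
        have htt : |t| = t := abs_of_pos ht.1
        rw [htt] at habs
        nlinarith [norm_nonneg w]
    have h01 := hanti (Set.mem_Icc.mpr ⟨le_refl 0, zero_le_one⟩)
      (Set.mem_Icc.mpr ⟨zero_le_one, le_refl 1⟩) zero_le_one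
    simp only [one_smul, zero_smul, add_zero, one_pow] at h01
    nlinarith [h01]
  -- Step 3: ν‖uⁿ − u*‖ ≤ β‖uⁿ⁺¹ − uⁿ‖.
  have hB : ∀ n : ℕ, ν * ‖u n - ustar‖ ≤ β * ‖u (n + 1) - u n‖ := by
    intro n
    have h2 := hF2 (u n) ustar
    rw [hustar] at h2
    have hit := hiter n (u n - ustar)
    have hF : F (u n) (u n - ustar) = a (u n) (u n - u (n + 1)) (u n - ustar) := by
      have hsub : a (u n) (u n - u (n + 1)) (u n - ustar)
          = a (u n) (u n) (u n - ustar) - a (u n) (u (n + 1)) (u n - ustar) := by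
        rw [map_sub]
        simp only [LinearMap.sub_apply, map_sub]
        ring
      rw [hsub]
      linarith [hit]
    have hbd := hbdd (u n) (u n - u (n + 1)) (u n - ustar)
    rw [hF] at h2
    have hrev : ‖u n - u (n + 1)‖ = ‖u (n + 1) - u n‖ := norm_sub_rev _ _
    rw [hrev] at hbd
    rcases eq_or_lt_of_le (norm_nonneg (u n - ustar)) with h0 | hpos
    · rw [← h0, mul_zero]
      positivity
    · apply le_of_mul_le_mul_right _ hpos
      nlinarith
  -- Main argument.
  intro k hk
  set d := ‖u k - u (k - 1)‖ with hd_def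
  have hkk : (k - 1) + 1 = k := Nat.succ_pred_eq_of_pos hk
  have hBk : ν * ‖u (k - 1) - ustar‖ ≤ β * d := by
    have := hB (k - 1)
    rwa [hkk] at this
  have hC3bd : ‖u k - ustar‖ ≤ C₃ * d := by
    have htri : ‖u k - ustar‖ ≤ ‖u k - u (k - 1)‖ + ‖u (k - 1) - ustar‖ := by
      have : u k - ustar = (u k - u (k - 1)) + (u (k - 1) - ustar) := by abel
      rw [this]
      exact norm_add_le _ _
    have hdiv : ‖u (k - 1) - ustar‖ ≤ β / ν * d := by
      rw [div_mul_eq_mul_div, le_div_iff₀ hν]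
      nlinarith
    rw [hC₃]
    nlinarith
  have hHk : H (u k) - H ustar ≤ L / 2 * (C₃ * d) ^ 2 := by
    have h1 := hHupp (u k - ustar)
    rw [add_sub_cancel] at h1
    have h2 : ‖u k - ustar‖ ^ 2 ≤ (C₃ * d) ^ 2 := by
      apply sq_le_sq'
      · nlinarith [norm_nonneg (u k - ustar)]
      · exact hC3bd
    nlinarith
  have hpartial : ∀ N : ℕ, CH * ∑ j ∈ Finset.range N, ‖u (k + 1 + j) - u (k + j)‖ ^ 2
      ≤ H (u k) - H (u (k + N)) := by
    intro N
    induction N with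
    | zero => simp
    | succ N ih =>
      rw [Finset.sum_range_succ, mul_add]
      have h4 := hF4 (k + N + 1) (by omega)
      have hidx : (k + N + 1) - 1 = k + N := by omega
      rw [hidx] at h4
      have heq1 : k + 1 + N = k + N + 1 := by ring
      have heq2 : k + (N + 1) = k + N + 1 := by ring
      rw [heq1, heq2]
      linarith
  have hbound : ∀ N : ℕ, ∑ j ∈ Finset.range N, ‖u (k + 1 + j) - u (k + j)‖ ^ 2 ≤ C₄ * d ^ 2 := by
    intro N
    have h1 := hpartial N
    have h2 : H ustar ≤ H (u (k + N)) := by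
      have := hHlow (u (k + N) - ustar)
      rwa [add_sub_cancel] at this
    rw [hC₄, div_mul_eq_mul_div, le_div_iff₀ (by positivity)]
    nlinarith
  have hnonneg : ∀ j : ℕ, (0:ℝ) ≤ ‖u (k + 1 + j) - u (k + j)‖ ^ 2 := fun j => by positivity
  have hsum := summable_of_sum_range_le hnonneg hbound
  exact ⟨hsum, Summable.tsum_le_of_sum_range_le hsum hbound⟩
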